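/- For all integers t ≥ 1 and t' ≥ 0, one has [t+t' choose t]_q · [K,K̃;t+t'] = Σ_{j=0}^{t'} (−1)^j · q^{t(t'−j)} · [t+j−1 choose j]_q · K^{j} · [K,K̃;t] · [K,K̃;t'−j] in D_q. -/

import Mathlib

noncomputable section

/-- Generators of the quantum double `D_q`. -/
inductive DGen : Type
  | E | F | K | Kinv | Kt | Ktinv
  deriving DecidableEq

/-- The defining relations of `D_q`. -/
inductive DRel (k : Type) [Field k] (q : k) :
    FreeAlgebra k DGen → FreeAlgebra k DGen → Prop
  | KE : DRel k q (FreeAlgebra.ι k DGen.K * FreeAlgebra.ι k DGen.E)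
      ((q ^ 2) • (FreeAlgebra.ι k DGen.E * FreeAlgebra.ι k DGen.K))
  | KF : DRel k q (FreeAlgebra.ι k DGen.K * FreeAlgebra.ι k DGen.F)
      (((q ^ 2)⁻¹) • (FreeAlgebra.ι k DGen.F * FreeAlgebra.ι k DGen.K))
  | KtE : DRel k q (FreeAlgebra.ι k DGen.Kt * FreeAlgebra.ι k DGen.E)
      ((q ^ 2) • (FreeAlgebra.ι k DGen.E * FreeAlgebra.ι k DGen.Kt))
  | KtF : DRel k q (FreeAlgebra.ι k DGen.Kt * FreeAlgebra.ι k DGen.F)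
      (((q ^ 2)⁻¹) • (FreeAlgebra.ι k DGen.F * FreeAlgebra.ι k DGen.Kt))
  | KKinv : DRel k q (FreeAlgebra.ι k DGen.K * FreeAlgebra.ι k DGen.Kinv) 1
  | KinvK : DRel k q (FreeAlgebra.ι k DGen.Kinv * FreeAlgebra.ι k DGen.K) 1
  | KtKtinv : DRel k q (FreeAlgebra.ι k DGen.Kt * FreeAlgebra.ι k DGen.Ktinv) 1
  | KtinvKt : DRel k q (FreeAlgebra.ι k DGen.Ktinv * FreeAlgebra.ι k DGen.Kt) 1
  | KKt : DRel k q (FreeAlgebra.ι k DGen.K * FreeAlgebra.ι k DGen.Kt)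
      (FreeAlgebra.ι k DGen.Kt * FreeAlgebra.ι k DGen.K)
  | EF : DRel k q (FreeAlgebra.ι k DGen.E * FreeAlgebra.ι k DGen.F)
      (FreeAlgebra.ι k DGen.F * FreeAlgebra.ι k DGen.E +
        ((q - q⁻¹)⁻¹) • (FreeAlgebra.ι k DGen.K - FreeAlgebra.ι k DGen.Ktinv))

/-- The quantum double `D_q` of `U_q(sl2)^{≤0}`, presented by generators and relations. -/
abbrev Dq (k : Type) [Field k] (q : k) := RingQuot (DRel k q)

def DE (k : Type) [Field k] (q : k) : Dq k q :=
  RingQuot.mkAlgHom k (DRel k q) (FreeAlgebra.ι k DGen.E)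
def DF (k : Type) [Field k] (q : k) : Dq k q :=
  RingQuot.mkAlgHom k (DRel k q) (FreeAlgebra.ι k DGen.F)
def DK (k : Type) [Field k] (q : k) : Dq k q :=
  RingQuot.mkAlgHom k (DRel k q) (FreeAlgebra.ι k DGen.K)
def DKinv (k : Type) [Field k] (q : k) : Dq k q :=
  RingQuot.mkAlgHom k (DRel k q) (FreeAlgebra.ι k DGen.Kinv)
def DKt (k : Type) [Field k] (q : k) : Dq k q :=
  RingQuot.mkAlgHom k (DRel k q) (FreeAlgebra.ι k DGen.Kt)
def DKtinv (k : Type) [Field k] (q : k) : Dq k q :=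
  RingQuot.mkAlgHom k (DRel k q) (FreeAlgebra.ι k DGen.Ktinv)

/-- The quantum integer `[n]_q = (qⁿ - q⁻ⁿ)/(q - q⁻¹)`. -/
def qint (k : Type) [Field k] (q : k) (n : ℕ) : k := (q ^ n - q⁻¹ ^ n) / (q - q⁻¹)

/-- The quantum factorial `[n]_q!`. -/
def qfact (k : Type) [Field k] (q : k) : ℕ → k
  | 0 => 1
  | n + 1 => qfact k q n * qint k q (n + 1)

/-- The Gaussian binomial coefficient `[m choose n]_q`. -/
def qbinom (k : Type) [Field k] (q : k) (m n : ℕ) : k :=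
  qfact k q m / (qfact k q n * qfact k q (m - n))

/-- The element `[K,K̃;c;t] = ∏_{s=1}^t (K q^{c-s+1} - K̃⁻¹ q^{-c+s-1})/(q^s - q^{-s})` of `D_q`. -/
def KKtc (k : Type) [Field k] (q : k) (c : ℤ) : ℕ → Dq k q
  | 0 => 1
  | t + 1 =>
      KKtc k q c t *
        ((q ^ ((t : ℤ) + 1) - q ^ (-((t : ℤ) + 1)))⁻¹ •
          (q ^ (c - (t : ℤ)) • DK k q - q ^ ((t : ℤ) - c) • DKtinv k q))

section scalars
variable {k : Type} [Field k] {q : k}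

lemma pow_sub_ne (hq0 : q ≠ 0) (hq : ∀ n : ℕ, 0 < n → q ^ n ≠ 1) (n : ℕ) :
    q ^ (n+1) - q⁻¹ ^ (n+1) ≠ 0 := by
  intro h
  apply hq (2*(n+1)) (by positivity)
  have h1 : q ^ (n+1) = q⁻¹ ^ (n+1) := sub_eq_zero.mp h
  have h2 : q ^ (2*(n+1)) = q ^ (n+1) * q ^ (n+1) := by ring
  rw [h2]; nth_rewrite 2 [h1]
  rw [← mul_pow, mul_inv_cancel₀ hq0, one_pow]

lemma qsub_ne (hq0 : q ≠ 0) (hq : ∀ n : ℕ, 0 < n → q ^ n ≠ 1) : q - q⁻¹ ≠ 0 := by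
  have := pow_sub_ne hq0 hq 0
  simpa using this

lemma qint_succ_ne (hq0 : q ≠ 0) (hq : ∀ n : ℕ, 0 < n → q ^ n ≠ 1) (n : ℕ) :
    qint k q (n+1) ≠ 0 :=
  div_ne_zero (pow_sub_ne hq0 hq n) (qsub_ne hq0 hq)

lemma qfact_ne (hq0 : q ≠ 0) (hq : ∀ n : ℕ, 0 < n → q ^ n ≠ 1) : ∀ n, qfact k q n ≠ 0
  | 0 => one_ne_zero
  | n+1 => mul_ne_zero (qfact_ne hq0 hq n) (qint_succ_ne hq0 hq n)

lemma qint_zero : qint k q 0 = 0 := by simp [qint]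

lemma qint_add (a b : ℕ) :
    qint k q (a+b) = q^a * qint k q b + (q⁻¹)^b * qint k q a := by
  unfold qint
  rw [← mul_div_assoc, ← mul_div_assoc, ← add_div]
  congr 1
  rw [pow_add]
  ring

lemma qbinom_add (a b : ℕ) : qbinom k q (a+b) b = qfact k q (a+b) / (qfact k q b * qfact k q a) := by
  simp [qbinom]

lemma qbinom_add' (a b : ℕ) : qbinom k q (a+b) a = qfact k q (a+b) / (qfact k q a * qfact k q b) := by
  simp [qbinom]

lemma qbinom_self (hq0 : q ≠ 0) (hq : ∀ n : ℕ, 0 < n → q ^ n ≠ 1) (n : ℕ) :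
    qbinom k q n n = 1 := by
  have := qfact_ne hq0 hq n
  simp [qbinom, qfact]
  simpa using this

lemma qbinom_zero (hq0 : q ≠ 0) (hq : ∀ n : ℕ, 0 < n → q ^ n ≠ 1) (n : ℕ) :
    qbinom k q n 0 = 1 := by
  have := qfact_ne hq0 hq n
  simp [qbinom, qfact]
  simpa using this

lemma L5 (hq0 : q ≠ 0) (hq : ∀ n : ℕ, 0 < n → q ^ n ≠ 1) (s i : ℕ) :
    qbinom k q (s+i+1) (i+1) * qint k q (i+1) = qbinom k q (s+i) i * qint k q (s+i+1) := by
  have h1 : qbinom k q (s+i+1) (i+1) = qfact k q (s+i+1) / (qfact k q (i+1) * qfact k q s) := by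
    have h := qbinom_add (k := k) (q := q) s (i+1)
    rw [show s + (i+1) = s+i+1 by omega] at h
    rw [h]
  have h2 : qbinom k q (s+i) i = qfact k q (s+i) / (qfact k q i * qfact k q s) := by
    rw [qbinom_add (k := k) (q := q) s i]
  rw [h1, h2, show qfact k q (s+i+1) = qfact k q (s+i) * qint k q (s+i+1) from rfl,
    show qfact k q (i+1) = qfact k q i * qint k q (i+1) from rfl]
  have hf1 := qfact_ne hq0 hq i
  have hf2 := qfact_ne hq0 hq s
  have hf3 := qfact_ne hq0 hq (s+i)
  have hi := qint_succ_ne hq0 hq i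
  field_simp

lemma L6 (hq0 : q ≠ 0) (hq : ∀ n : ℕ, 0 < n → q ^ n ≠ 1) (t t' : ℕ) :
    qbinom k q (t+t') t * qint k q (t+t'+1) = qbinom k q (t+t'+1) t * qint k q (t'+1) := by
  have h1 : qbinom k q (t+t') t = qfact k q (t+t') / (qfact k q t * qfact k q t') := qbinom_add' t t'
  have h2 : qbinom k q (t+t'+1) t = qfact k q (t+t'+1) / (qfact k q t * qfact k q (t'+1)) := by
    have h := qbinom_add' (k := k) (q := q) t (t'+1)
    rw [show t + (t'+1) = t+t'+1 by omega] at h; exact h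
  rw [h1, h2, show qfact k q (t+t'+1) = qfact k q (t+t') * qint k q (t+t'+1) from rfl,
    show qfact k q (t'+1) = qfact k q t' * qint k q (t'+1) from rfl]
  have hf1 := qfact_ne hq0 hq t
  have hf2 := qfact_ne hq0 hq t'
  have hf3 := qfact_ne hq0 hq (t+t')
  have hi := qint_succ_ne hq0 hq t'
  field_simp

end scalars

def Bq {k : Type} [Field k] (q : k) {R : Type} [Ring R] [Algebra k R] (x y : R) (s : ℕ) : R :=
  (q^(s+1) - (q⁻¹)^(s+1))⁻¹ • ((q⁻¹)^s • x - q^s • y)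

def Pq {k : Type} [Field k] (q : k) {R : Type} [Ring R] [Algebra k R] (x y : R) : ℕ → R
  | 0 => 1
  | n+1 => Pq q x y n * Bq q x y n

section general
variable {k : Type} [Field k] (q : k) {R : Type} [Ring R] [Algebra k R] (x y : R)

lemma commute_x_Bq (hxy : Commute x y) (s : ℕ) : Commute x (Bq q x y s) := by
  unfold Bq
  exact (((Commute.refl x).smul_right _).sub_right (hxy.smul_right _)).smul_right _

lemma commute_x_Pq (hxy : Commute x y) : ∀ n, Commute x (Pq q x y n)
  | 0 => Commute.one_right x
  | n+1 => (commute_x_Pq hxy n).mul_right (commute_x_Bq q x y hxy n)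

lemma qint_smul_Bq (hpow : ∀ j : ℕ, q ^ (j+1) - q⁻¹ ^ (j+1) ≠ 0) (s : ℕ) :
    qint k q (s+1) • Bq q x y s = (q - q⁻¹)⁻¹ • ((q⁻¹)^s • x - q^s • y) := by
  rw [Bq, smul_smul]
  congr 1
  rw [qint, div_eq_mul_inv, mul_right_comm, mul_inv_cancel₀ (hpow s), one_mul]

lemma Bsplit (hpow : ∀ j : ℕ, q ^ (j+1) - q⁻¹ ^ (j+1) ≠ 0) (n m : ℕ) :
    qint k q (n+m+1) • Bq q x y (n+m) =
      (q^n * qint k q (m+1)) • Bq q x y m - ((q⁻¹)^m * qint k q n) • x := by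
  rw [show ((n+m+1) : ℕ) = (n+m)+1 from rfl, qint_smul_Bq q x y hpow (n+m),
    mul_smul, qint_smul_Bq q x y hpow m,
    show qint k q n = (q^n - q⁻¹^n) * (q-q⁻¹)⁻¹ from by rw [qint, div_eq_mul_inv]]
  match_scalars <;> ring

lemma monomial_mul_x (hxy : Commute x y) (t a b : ℕ) :
    (x^a * Pq q x y t * Pq q x y b) * x = x^(a+1) * Pq q x y t * Pq q x y b := by
  have h1 := (commute_x_Pq q x y hxy b).eq
  have h2 := (commute_x_Pq q x y hxy t).eq
  calc x^a * Pq q x y t * Pq q x y b * x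
      = x^a * Pq q x y t * (x * Pq q x y b) := by rw [mul_assoc, ← h1]
    _ = x^a * (Pq q x y t * x) * Pq q x y b := by rw [mul_assoc, mul_assoc, mul_assoc]
    _ = x^a * x * Pq q x y t * Pq q x y b := by rw [← h2, ← mul_assoc]
    _ = x^(a+1) * Pq q x y t * Pq q x y b := by rw [pow_succ]

lemma smul_cancelk {c : k} (hc : c ≠ 0) {a b : R} (h : c • a = c • b) : a = b := by
  have := congrArg (fun z => c⁻¹ • z) h
  simpa [smul_smul, inv_mul_cancel₀ hc] using this

theorem mainlem (hq0 : q ≠ 0) (hq : ∀ n : ℕ, 0 < n → q ^ n ≠ 1) (hxy : Commute x y)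
    (t t' : ℕ) (ht : 1 ≤ t) :
    (qbinom k q (t + t') t) • Pq q x y (t + t') =
      ∑ j ∈ Finset.range (t' + 1),
        ((-1 : k) ^ j * q ^ (t * (t' - j)) * qbinom k q (t + j - 1) j) •
          (x ^ j * Pq q x y t * Pq q x y (t' - j)) := by
  have hpow := pow_sub_ne hq0 hq
  induction t' with
  | zero =>
      simp [qbinom_self hq0 hq, qbinom_zero hq0 hq, show Pq q x y 0 = 1 from rfl]
  | succ t' IH =>
      -- notation
      set P : ℕ → R := Pq q x y with hP
      -- the two families of terms
      set A : ℕ → R := fun j =>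
        (((-1 : k) ^ j * q ^ (t * (t' - j)) * qbinom k q (t + j - 1) j) *
          (q ^ (t + j) * qint k q (t' + 1 - j))) • (x ^ j * P t * P (t' + 1 - j)) with hA
      set C : ℕ → R := fun j =>
        (((-1 : k) ^ j * q ^ (t * (t' - j)) * qbinom k q (t + j - 1) j) *
          ((q⁻¹) ^ (t' - j) * qint k q (t + j))) • (x ^ (j + 1) * P t * P (t' - j)) with hC
      have key : (qint k q (t + t' + 1) * qbinom k q (t + t') t) • P ((t + t') + 1)
          = (∑ j ∈ Finset.range (t' + 1), A j) - ∑ j ∈ Finset.range (t' + 1), C j := by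
        calc (qint k q (t + t' + 1) * qbinom k q (t + t') t) • P ((t + t') + 1)
            = qint k q (t + t' + 1) • ((qbinom k q (t + t') t • P (t + t')) * Bq q x y (t + t')) := by
              rw [show P ((t + t') + 1) = P (t + t') * Bq q x y (t + t') from rfl,
                mul_smul, smul_mul_assoc]
          _ = qint k q (t + t' + 1) •
              ((∑ j ∈ Finset.range (t' + 1),
                ((-1 : k) ^ j * q ^ (t * (t' - j)) * qbinom k q (t + j - 1) j) •
                  (x ^ j * P t * P (t' - j))) * Bq q x y (t + t')) := by rw [IH]
          _ = ∑ j ∈ Finset.range (t' + 1),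
              ((-1 : k) ^ j * q ^ (t * (t' - j)) * qbinom k q (t + j - 1) j) •
                ((x ^ j * P t * P (t' - j)) * (qint k q (t + t' + 1) • Bq q x y (t + t'))) := by
              rw [Finset.sum_mul, Finset.smul_sum]
              refine Finset.sum_congr rfl fun j hj => ?_
              rw [smul_mul_assoc, mul_smul_comm, smul_smul, smul_smul, mul_comm (qint k q (t + t' + 1))]
          _ = ∑ j ∈ Finset.range (t' + 1), (A j - C j) := by
              refine Finset.sum_congr rfl fun j hj => ?_
              have hjle : j ≤ t' := Nat.lt_succ_iff.mp (Finset.mem_range.mp hj)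
              have hidx : t + t' = (t + j) + (t' - j) := by omega
              rw [hidx, Bsplit q x y hpow (t + j) (t' - j), mul_sub, smul_sub]
              simp only [hA, hC]
              congr 1
              · rw [mul_smul_comm, smul_smul,
                  show x ^ j * P t * P (t' - j) * Bq q x y (t' - j)
                    = x ^ j * P t * (P (t' - j) * Bq q x y (t' - j)) from by rw [mul_assoc],
                  show P (t' - j) * Bq q x y (t' - j) = P ((t' - j) + 1) from rfl,
                  show t' + 1 - j = (t' - j) + 1 from by omega]
              · rw [mul_smul_comm, smul_smul, monomial_mul_x q x y hxy t j (t' - j)]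
          _ = (∑ j ∈ Finset.range (t' + 1), A j) - ∑ j ∈ Finset.range (t' + 1), C j := by
              rw [Finset.sum_sub_distrib]
      -- now conclude
      refine smul_cancelk (qint_succ_ne hq0 hq t') ?_
      have lhs_eq : qint k q (t' + 1) • ((qbinom k q (t + (t' + 1)) t) • P (t + (t' + 1)))
          = (qint k q (t + t' + 1) * qbinom k q (t + t') t) • P ((t + t') + 1) := by
        rw [show t + (t' + 1) = (t + t') + 1 from rfl, smul_smul]
        congr 1
        linear_combination -(L6 hq0 hq t t')
      rw [lhs_eq, key, Finset.smul_sum]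
      have rhs_eq : ∀ j ∈ Finset.range (t' + 1 + 1),
          qint k q (t' + 1) •
            (((-1 : k) ^ j * q ^ (t * (t' + 1 - j)) * qbinom k q (t + j - 1) j) •
              (x ^ j * P t * P (t' + 1 - j)))
          = (qint k q (t' + 1) * ((-1 : k) ^ j * q ^ (t * (t' + 1 - j)) * qbinom k q (t + j - 1) j)) •
              (x ^ j * P t * P (t' + 1 - j)) := fun j _ => by rw [smul_smul]
      rw [Finset.sum_congr rfl rhs_eq]
      symm
      -- main sum manipulation
      have E0 : (qint k q (t' + 1) * ((-1 : k) ^ 0 * q ^ (t * (t' + 1 - 0)) * qbinom k q (t + 0 - 1) 0)) •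
          (x ^ 0 * P t * P (t' + 1 - 0)) = A 0 := by
        simp only [hA]
        congr 1
        simp only [Nat.sub_zero, Nat.add_zero, pow_zero]
        rw [show t * (t' + 1) = t * t' + t from by ring]
        rw [pow_add]
        ring
      have Esucc : ∀ j ∈ Finset.range (t' + 1),
          (qint k q (t' + 1) * ((-1 : k) ^ (j+1) * q ^ (t * (t' + 1 - (j+1))) * qbinom k q (t + (j+1) - 1) (j+1))) •
            (x ^ (j+1) * P t * P (t' + 1 - (j+1))) = A (j + 1) - C j := by
        intro j hj
        have hjle : j ≤ t' := Nat.lt_succ_iff.mp (Finset.mem_range.mp hj)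
        obtain ⟨s, rfl⟩ : ∃ s, t = s + 1 := ⟨t - 1, by omega⟩
        simp only [hA, hC]
        simp only [show t' + 1 - (j + 1) = t' - j from by omega,
          show s + 1 + (j + 1) - 1 = s + j + 1 from by omega,
          show s + 1 + j - 1 = s + j from by omega]
        simp only [show s + 1 + j = s + j + 1 from by omega]
        rw [← sub_smul]
        congr 1
        -- scalar identity
        rcases Nat.lt_or_ge j t' with hlt | hge
        · -- j < t'
          obtain ⟨d, rfl⟩ : ∃ d, t' = j + d + 1 := ⟨t' - j - 1, by omega⟩
          simp only [show j + d + 1 - j = d + 1 from by omega,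
            show j + d + 1 - (j + 1) = d from by omega,
            show j + d + 1 + 1 = (j + 1) + (d + 1) from by omega]
          have hL3 := qint_add (k := k) (q := q) (j+1) (d+1)
          have hL5 := L5 hq0 hq s j
          linear_combination ((-1 : k) ^ (j+1) * q ^ ((s+1) * (d+1)) * qbinom k q (s+j+1) (j+1)) * hL3 +
            ((-1 : k) ^ (j+1) * q ^ ((s+1) * (d+1)) * (q⁻¹) ^ (d+1)) * hL5
        · -- j = t'
          have hje : j = t' := le_antisymm hjle hge
          subst hje
          simp only [Nat.sub_self, qint_zero, pow_zero]
          have hL5 := L5 hq0 hq s j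
          rw [show s + j + 1 = s + (j + 1) from by omega] at hL5 ⊢
          linear_combination ((-1 : k) ^ (j+1)) * hL5
      calc ∑ j ∈ Finset.range (t' + 1 + 1),
            (qint k q (t' + 1) * ((-1 : k) ^ j * q ^ (t * (t' + 1 - j)) * qbinom k q (t + j - 1) j)) •
              (x ^ j * P t * P (t' + 1 - j))
          = (∑ j ∈ Finset.range (t' + 1),
              (qint k q (t' + 1) * ((-1 : k) ^ (j+1) * q ^ (t * (t' + 1 - (j+1))) * qbinom k q (t + (j+1) - 1) (j+1))) •
                (x ^ (j+1) * P t * P (t' + 1 - (j+1)))) +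
              (qint k q (t' + 1) * ((-1 : k) ^ 0 * q ^ (t * (t' + 1 - 0)) * qbinom k q (t + 0 - 1) 0)) •
                (x ^ 0 * P t * P (t' + 1 - 0)) := Finset.sum_range_succ' _ (t' + 1)
        _ = (∑ j ∈ Finset.range (t' + 1), (A (j+1) - C j)) + A 0 := by
            rw [E0, Finset.sum_congr rfl Esucc]
        _ = ((∑ j ∈ Finset.range (t' + 1), A (j+1)) + A 0) - ∑ j ∈ Finset.range (t' + 1), C j := by
            rw [Finset.sum_sub_distrib]; abel
        _ = (∑ j ∈ Finset.range (t' + 1 + 1), A j) - ∑ j ∈ Finset.range (t' + 1), C j := by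
            rw [Finset.sum_range_succ' A (t' + 1)]
        _ = ((∑ j ∈ Finset.range (t' + 1), A j) + A (t' + 1)) - ∑ j ∈ Finset.range (t' + 1), C j := by
            rw [Finset.sum_range_succ]
        _ = (∑ j ∈ Finset.range (t' + 1), A j) - ∑ j ∈ Finset.range (t' + 1), C j := by
            have : A (t' + 1) = 0 := by
              simp only [hA]
              simp [Nat.sub_self, qint_zero]
            rw [this, add_zero]

end general

section inst
variable {k : Type} [Field k] {q : k}

lemma commute_DK_DKtinv : Commute (DK k q) (DKtinv k q) := by
  have hKKt : DK k q * DKt k q = DKt k q * DK k q := by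
    rw [DK, DKt, ← map_mul, ← map_mul]
    exact RingQuot.mkAlgHom_rel k DRel.KKt
  have h2 : DKt k q * DKtinv k q = 1 := by
    rw [DKt, DKtinv, ← map_mul, RingQuot.mkAlgHom_rel k DRel.KtKtinv, map_one]
  have h3 : DKtinv k q * DKt k q = 1 := by
    rw [DKtinv, DKt, ← map_mul, RingQuot.mkAlgHom_rel k DRel.KtinvKt, map_one]
  show DK k q * DKtinv k q = DKtinv k q * DK k q
  calc DK k q * DKtinv k q = 1 * (DK k q * DKtinv k q) := (one_mul _).symm
    _ = DKtinv k q * DKt k q * (DK k q * DKtinv k q) := by rw [h3]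
    _ = DKtinv k q * (DKt k q * DK k q) * DKtinv k q := by
        rw [mul_assoc, mul_assoc, mul_assoc]
    _ = DKtinv k q * (DK k q * DKt k q) * DKtinv k q := by rw [← hKKt]
    _ = DKtinv k q * DK k q * (DKt k q * DKtinv k q) := by
        rw [mul_assoc, mul_assoc, mul_assoc]
    _ = DKtinv k q * DK k q := by rw [h2, mul_one]

lemma KKtc_eq_Pq : ∀ n, KKtc k q 0 n = Pq q (DK k q) (DKtinv k q) n
  | 0 => rfl
  | n+1 => by
    rw [KKtc, KKtc_eq_Pq n, Pq]
    congr 1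
    rw [Bq]
    simp only [zero_sub, sub_zero, zpow_neg,
      show ((n : ℤ) + 1) = ((n + 1 : ℕ) : ℤ) from by push_cast; ring,
      zpow_natCast, inv_pow]

end inst

/-- for `t ≥ 1` and `t' ≥ 0`,
`[t+t' choose t]_q·[K,K̃;t+t'] = Σ_{j=0}^{t'} (−1)^j·q^{t(t'−j)}·[t+j−1 choose j]_q·K^j·[K,K̃;t]·[K,K̃;t'−j]`. -/
theorem qbinom_KKtc_product (k : Type) [Field k] (q : k)
    (hq0 : q ≠ 0) (hq : ∀ n : ℕ, 0 < n → q ^ n ≠ 1)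
    (t t' : ℕ) (ht : 1 ≤ t) :
    (qbinom k q (t + t') t) • KKtc k q 0 (t + t') =
      ∑ j ∈ Finset.range (t' + 1),
        ((-1 : k) ^ j * q ^ (t * (t' - j)) * qbinom k q (t + j - 1) j) •
          (DK k q ^ j * KKtc k q 0 t * KKtc k q 0 (t' - j)) := by
  simp only [KKtc_eq_Pq]
  exact mainlem q (DK k q) (DKtinv k q) hq0 hq commute_DK_DKtinv t t' ht
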